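/- Let w ∈ ℂ. The function g(z) := ∑_{n=0}^∞ ((1+z/2)_n/(3/2)_n)·(w²/4)^n/n! = ₁F₁(1 + z/2; 3/2; w²/4) is complex differentiable at z = 0, and 2·g′(0) = ∑_{n=0}^∞ ((w²/4)^n/(3/2)_n)·(ψ(n+1) + γ). Likewise h(z) := ₁F₁(1 − z/2; 3/2; w²/4) satisfies −2·h′(0) = ∑_{n=0}^∞ ((w²/4)^n/(3/2)_n)·(ψ(n+1) + γ). -/

import Mathlib

noncomputable section
open Complex MeasureTheory Set Filter Topology

/-- Pochhammer symbol `(a)_n`. -/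
def poch (a : ℂ) (n : ℕ) : ℂ := (ascPochhammer ℂ n).eval a

/-- Confluent hypergeometric function `₁F₁(a; c; z)`. -/
def oneF1 (a c z : ℂ) : ℂ := ∑' n : ℕ, poch a n / poch c n * z ^ n / (n.factorial : ℂ)

/-- Complex error function, defined by integrating along the segment from `0` to `w`. -/
def cerf (w : ℂ) : ℂ :=
  (2 / (Real.sqrt Real.pi : ℂ)) * ∫ t in (0:ℝ)..1, w * Complex.exp (-(t * w) ^ 2)

/-- Complex imaginary error function. -/
def cerfi (w : ℂ) : ℂ :=
  (2 / (Real.sqrt Real.pi : ℂ)) * ∫ t in (0:ℝ)..1, w * Complex.exp ((t * w) ^ 2)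

/-- Digamma function `ψ = Γ'/Γ`. -/
def digam (x : ℝ) : ℝ := deriv Real.Gamma x / Real.Gamma x

lemma poch_eq_prod (a : ℂ) (n : ℕ) : poch a n = ∏ i ∈ Finset.range n, (a + i) := by
  induction n with
  | zero => simp [poch]
  | succ n ih =>
      rw [poch, ascPochhammer_succ_right, Polynomial.eval_mul, Finset.prod_range_succ, ← ih]
      simp [poch]

def Pp (n : ℕ) : ℝ := ∏ i ∈ Finset.range n, (3/2 + i)

lemma Pp_pos (n : ℕ) : 0 < Pp n := Finset.prod_pos (fun i _ => by positivity)

lemma poch32 (n : ℕ) : poch (3/2) n = ((Pp n : ℝ) : ℂ) := by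
  rw [poch_eq_prod, Pp]
  push_cast
  rfl

lemma digam_nat (n : ℕ) : digam (n + 1) = -Real.eulerMascheroniConstant + harmonic n := by
  rw [digam, Real.deriv_Gamma_nat, Real.Gamma_nat_eq_factorial,
    mul_div_assoc, mul_div_cancel₀ _ (by positivity)]

lemma key (x : ℂ) :
    HasDerivAt (fun z : ℂ => ∑' n : ℕ, poch (1 + z / 2) n / poch (3/2) n * x ^ n / (n.factorial : ℂ))
      (∑' n : ℕ, (∑ i ∈ Finset.range n,
          (∏ j ∈ (Finset.range n).erase i, ((1:ℂ) + 0 / 2 + j)) * (1/2)) *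
        (x ^ n / (poch (3/2) n * n.factorial))) 0 := by
  set f : ℕ → ℂ → ℂ := fun n z =>
    (∏ i ∈ Finset.range n, (1 + z / 2 + (i:ℂ))) * (x ^ n / (poch (3/2) n * n.factorial)) with hf
  set f' : ℕ → ℂ → ℂ := fun n z =>
    (∑ i ∈ Finset.range n, (∏ j ∈ (Finset.range n).erase i, (1 + z / 2 + (j:ℂ))) * (1/2)) *
      (x ^ n / (poch (3/2) n * n.factorial)) with hf'
  have hterm : ∀ n (z : ℂ),
      poch (1 + z / 2) n / poch (3/2) n * x ^ n / (n.factorial : ℂ) = f n z := by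
    intro n z
    rw [hf, poch_eq_prod]
    ring
  have hderiv : ∀ n (z : ℂ), HasDerivAt (f n) (f' n z) z := by
    intro n z
    have h1 : ∀ i ∈ Finset.range n,
        HasDerivAt (fun z : ℂ => 1 + z / 2 + (i:ℂ)) ((2:ℂ)⁻¹) z := by
      intro i _
      simpa using (((hasDerivAt_id z).div_const 2).const_add 1).add_const (i:ℂ)
    have h2 := (HasDerivAt.fun_finsetProd h1).mul_const (x ^ n / (poch (3/2) n * n.factorial))
    have e : (∑ i ∈ Finset.range n, (∏ j ∈ (Finset.range n).erase i, (1 + z / 2 + (j:ℂ))) • (2:ℂ)⁻¹)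
        = ∑ i ∈ Finset.range n, (∏ j ∈ (Finset.range n).erase i, (1 + z / 2 + (j:ℂ))) * (1/2) := by
      refine Finset.sum_congr rfl fun i _ => ?_
      rw [smul_eq_mul]
      norm_num
    rw [hf']
    rw [e] at h2
    exact h2
  have hc : ∀ n, ‖x ^ n / (poch (3/2) n * n.factorial)‖
      = ‖x‖ ^ n / (Pp n * n.factorial) := by
    intro n
    rw [poch32]
    simp [norm_div, norm_pow, abs_of_pos (Pp_pos n), Complex.norm_natCast]
  have hfac : ∀ (n : ℕ) (z : ℂ), ‖z‖ ≤ 1 → ∀ j : ℕ, ‖1 + z / 2 + (j:ℂ)‖ ≤ 3/2 + j := by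
    intro n z hz j
    calc ‖1 + z / 2 + (j:ℂ)‖ ≤ ‖(1:ℂ)‖ + ‖z / 2‖ + ‖(j:ℂ)‖ := norm_add₃_le
      _ ≤ 1 + 1/2 + j := by
          simp only [norm_one, Complex.norm_natCast, norm_div, Complex.norm_ofNat]
          gcongr
      _ = 3/2 + j := by ring
  -- bound on product over subsets of range n
  have hprod : ∀ (n : ℕ) (s : Finset ℕ), s ⊆ Finset.range n → ∀ z : ℂ, ‖z‖ ≤ 1 →
      ‖∏ j ∈ s, (1 + z / 2 + (j:ℂ))‖ ≤ Pp n := by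
    intro n s hs z hz
    rw [norm_prod]
    calc ∏ j ∈ s, ‖1 + z / 2 + (j:ℂ)‖ ≤ ∏ j ∈ s, (3/2 + (j:ℝ)) := by
          apply Finset.prod_le_prod (fun j _ => norm_nonneg _) (fun j _ => hfac n z hz j)
      _ ≤ ∏ j ∈ Finset.range n, (3/2 + (j:ℝ)) := by
          have h2 : (1:ℝ) ≤ ∏ j ∈ Finset.range n \ s, (3/2 + (j:ℝ)) := by
            have := Finset.prod_le_prod (s := Finset.range n \ s) (f := fun _ => (1:ℝ))
              (g := fun j : ℕ => 3/2 + (j:ℝ)) (by intros; norm_num)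
              (by intro j _; have : (0:ℝ) ≤ j := Nat.cast_nonneg j; linarith)
            simpa using this
          calc ∏ j ∈ s, (3/2 + (j:ℝ))
              ≤ (∏ j ∈ s, (3/2 + (j:ℝ))) * ∏ j ∈ Finset.range n \ s, (3/2 + (j:ℝ)) := by
                apply le_mul_of_one_le_right _ h2
                apply Finset.prod_nonneg
                intro j _; have : (0:ℝ) ≤ j := Nat.cast_nonneg j; linarith
            _ = ∏ j ∈ Finset.range n, (3/2 + (j:ℝ)) := by rw [← Finset.prod_sdiff hs, mul_comm]
      _ = Pp n := rfl
  have hsummm : Summable (fun n : ℕ => (2 * ‖x‖) ^ n / n.factorial) :=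
    Real.summable_pow_div_factorial _
  -- pointwise summability on the ball
  have hsum : ∀ z : ℂ, ‖z‖ ≤ 1 → Summable (fun n => f n z) := by
    intro z hz
    apply Summable.of_norm
    apply Summable.of_nonneg_of_le (fun n => norm_nonneg _) _
      (Real.summable_pow_div_factorial ‖x‖)
    intro n
    rw [hf]
    simp only [norm_mul, hc]
    calc ‖∏ i ∈ Finset.range n, (1 + z / 2 + (i:ℂ))‖ * (‖x‖ ^ n / (Pp n * n.factorial))
        ≤ Pp n * (‖x‖ ^ n / (Pp n * n.factorial)) := by
          apply mul_le_mul_of_nonneg_right (hprod n _ (subset_refl _) z hz)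
          have := (Pp_pos n).le
          positivity
      _ = ‖x‖ ^ n / n.factorial := by
          have : Pp n * (‖x‖ ^ n / (Pp n * (n.factorial:ℝ)))
              = (Pp n / Pp n) * (‖x‖ ^ n / n.factorial) := by ring
          rw [this, div_self (Pp_pos n).ne', one_mul]
  have hbound : ∀ (n : ℕ) (z : ℂ), z ∈ Metric.ball (0:ℂ) 1 →
      ‖f' n z‖ ≤ (2 * ‖x‖) ^ n / n.factorial := by
    intro n z hz
    have hz1 : ‖z‖ ≤ 1 := by
      have := Metric.mem_ball.mp hz
      simpa [dist_eq_norm] using this.le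
    rw [hf']
    simp only [norm_mul, hc]
    have h1 : ‖∑ i ∈ Finset.range n, (∏ j ∈ (Finset.range n).erase i, (1 + z / 2 + (j:ℂ))) * (1/2)‖
        ≤ n * (Pp n * (1/2)) := by
      calc _ ≤ ∑ i ∈ Finset.range n,
            ‖(∏ j ∈ (Finset.range n).erase i, (1 + z / 2 + (j:ℂ))) * (1/2)‖ := norm_sum_le _ _
        _ ≤ ∑ _i ∈ Finset.range n, Pp n * (1/2) := by
            apply Finset.sum_le_sum
            intro i _
            rw [norm_mul]
            have : ‖(1/2 : ℂ)‖ = 1/2 := by norm_num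
            rw [this]
            gcongr
            exact hprod n _ (Finset.erase_subset _ _) z hz1
        _ = n * (Pp n * (1/2)) := by simp [mul_comm]
    calc ‖∑ i ∈ Finset.range n, (∏ j ∈ (Finset.range n).erase i, (1 + z / 2 + (j:ℂ))) * (1/2)‖
          * (‖x‖ ^ n / (Pp n * n.factorial))
        ≤ (n * (Pp n * (1/2))) * (‖x‖ ^ n / (Pp n * n.factorial)) := by
          apply mul_le_mul_of_nonneg_right h1
          have := (Pp_pos n).le
          positivity
      _ = (n * (1/2)) * (‖x‖ ^ n / n.factorial) := by
          have h3 : (n:ℝ) * (Pp n * (1/2)) * (‖x‖ ^ n / (Pp n * (n.factorial:ℝ)))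
              = (Pp n / Pp n) * ((n * (1/2)) * (‖x‖ ^ n / n.factorial)) := by ring
          rw [h3, div_self (Pp_pos n).ne', one_mul]
      _ ≤ (2 * ‖x‖) ^ n / n.factorial := by
          rw [mul_pow, mul_div_assoc]
          gcongr ?_ * _
          have hn : (n : ℝ) ≤ 2 ^ n := by
            exact_mod_cast (Nat.lt_two_pow_self (n := n)).le
          nlinarith [pow_nonneg (norm_nonneg x) n, hn]
  have main : HasDerivAt (fun z : ℂ => ∑' n, f n z) (∑' n, f' n 0) 0 := by
    apply hasDerivAt_of_tendstoUniformlyOn (f := fun N z => ∑ n ∈ Finset.range N, f n z)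
      (f' := fun N z => ∑ n ∈ Finset.range N, f' n z) Metric.isOpen_ball
      (tendstoUniformlyOn_tsum_nat hsummm hbound)
    · filter_upwards with N z hz
      exact HasDerivAt.fun_sum (fun n _ => hderiv n z)
    · intro z hz
      have hz1 : ‖z‖ ≤ 1 := by
        have := Metric.mem_ball.mp hz
        simpa [dist_eq_norm] using this.le
      exact ((hsum z hz1).hasSum).tendsto_sum_nat
    · simp
  have heq : (fun z : ℂ => ∑' n : ℕ, poch (1 + z / 2) n / poch (3/2) n * x ^ n / (n.factorial : ℂ))
      = fun z : ℂ => ∑' n, f n z := by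
    funext z
    exact tsum_congr (fun n => hterm n z)
  rw [heq]
  exact main

/-- Differentiability at `z = 0` of `z ↦ ₁F₁(1 ± z/2; 3/2; w²/4)` and evaluation of the
derivatives (equations (2.10)–(2.11) of Dixit–Kumar). -/
theorem deriv_oneF1_at_zero (w : ℂ) :
    (DifferentiableAt ℂ (fun z : ℂ => oneF1 (1 + z / 2) (3/2) (w ^ 2 / 4)) 0 ∧
      2 * deriv (fun z : ℂ => oneF1 (1 + z / 2) (3/2) (w ^ 2 / 4)) 0
        = ∑' n : ℕ, (w ^ 2 / 4) ^ n / poch (3/2) n *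
            ((digam (n + 1) : ℂ) + (Real.eulerMascheroniConstant : ℂ)))
    ∧ (DifferentiableAt ℂ (fun z : ℂ => oneF1 (1 - z / 2) (3/2) (w ^ 2 / 4)) 0 ∧
      -2 * deriv (fun z : ℂ => oneF1 (1 - z / 2) (3/2) (w ^ 2 / 4)) 0
        = ∑' n : ℕ, (w ^ 2 / 4) ^ n / poch (3/2) n *
            ((digam (n + 1) : ℂ) + (Real.eulerMascheroniConstant : ℂ))) := by

  set x : ℂ := w ^ 2 / 4 with hx
  set D : ℂ := ∑' n : ℕ, (∑ i ∈ Finset.range n,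
          (∏ j ∈ (Finset.range n).erase i, ((1:ℂ) + 0 / 2 + j)) * (1/2)) *
        (x ^ n / (poch (3/2) n * n.factorial)) with hD
  have hG : HasDerivAt (fun z : ℂ => oneF1 (1 + z / 2) (3/2) x) D 0 := key x
  -- the per-term identity
  have hterm : ∀ n : ℕ, 2 * ((∑ i ∈ Finset.range n,
          (∏ j ∈ (Finset.range n).erase i, ((1:ℂ) + 0 / 2 + j)) * (1/2)) *
        (x ^ n / (poch (3/2) n * n.factorial)))
      = x ^ n / poch (3/2) n *
          ((digam (n + 1) : ℂ) + (Real.eulerMascheroniConstant : ℂ)) := by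
    intro n
    have hr : ∏ j ∈ Finset.range n, ((1:ℂ) + 0 / 2 + j) = (n.factorial : ℂ) := by
      rw [← Finset.prod_range_add_one_eq_factorial]
      push_cast
      exact Finset.prod_congr rfl fun j _ => by ring
    have hpe : ∀ i ∈ Finset.range n,
        (∏ j ∈ (Finset.range n).erase i, ((1:ℂ) + 0 / 2 + j)) * (1/2)
          = (n.factorial : ℂ) * (1/2) * (1 + (i:ℂ))⁻¹ := by
      intro i hi
      have h := Finset.mul_prod_erase (Finset.range n) (fun j => (1:ℂ) + 0 / 2 + j) hi
      rw [hr] at h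
      have hne : ((1:ℂ) + 0 / 2 + i) ≠ 0 := by
        have : ((1:ℂ) + 0 / 2 + i) = ((i + 1 : ℕ) : ℂ) := by push_cast; ring
        rw [this]
        exact_mod_cast Nat.succ_ne_zero i
      have h2 : (∏ j ∈ (Finset.range n).erase i, ((1:ℂ) + 0 / 2 + j))
          = (n.factorial : ℂ) / ((1:ℂ) + 0 / 2 + i) := by
        rw [eq_div_iff hne, mul_comm]
        exact h
      rw [h2]
      have : ((1:ℂ) + 0 / 2 + i) = 1 + (i:ℂ) := by ring
      rw [this, div_eq_mul_inv]
      ring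
    rw [Finset.sum_congr rfl hpe, ← Finset.mul_sum]
    have hdg : ((digam (n + 1) : ℂ) + (Real.eulerMascheroniConstant : ℂ))
        = ∑ i ∈ Finset.range n, (1 + (i:ℂ))⁻¹ := by
      rw [digam_nat]
      push_cast [harmonic]
      rw [neg_add_cancel_comm]
      exact Finset.sum_congr rfl fun i _ => by rw [add_comm]
    rw [hdg]
    have hpoch : poch (3/2) n ≠ 0 := by
      rw [poch32]
      exact_mod_cast (Pp_pos n).ne'
    have hfac : (n.factorial : ℂ) ≠ 0 := Nat.cast_ne_zero.mpr n.factorial_ne_zero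
    field_simp
  have h2D : 2 * D = ∑' n : ℕ, x ^ n / poch (3/2) n *
      ((digam (n + 1) : ℂ) + (Real.eulerMascheroniConstant : ℂ)) := by
    rw [hD, ← tsum_mul_left]
    exact tsum_congr hterm
  -- minus part
  have hfun : (fun z : ℂ => oneF1 (1 - z / 2) (3/2) x)
      = (fun z : ℂ => oneF1 (1 + z / 2) (3/2) x) ∘ (fun z : ℂ => -z) := by
    funext z
    simp only [Function.comp_apply]
    congr 1
    ring
  have hneg : HasDerivAt (fun z : ℂ => -z) (-1 : ℂ) 0 := hasDerivAt_neg 0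
  have hG0 : HasDerivAt (fun z : ℂ => oneF1 (1 + z / 2) (3/2) x) D ((fun z : ℂ => -z) 0) := by
    simpa using hG
  have hH : HasDerivAt (fun z : ℂ => oneF1 (1 - z / 2) (3/2) x) (D * -1) 0 := by
    rw [hfun]
    exact hG0.comp 0 hneg
  refine ⟨⟨hG.differentiableAt, ?_⟩, hH.differentiableAt, ?_⟩
  · rw [hG.deriv]; exact h2D
  · rw [hH.deriv]; rw [← h2D]; ring
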